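/- Let α be a real number with 0 < α < 1 satisfying F(1 − α) = √2 · F(α). Then α = (√2 − 1)². -/

import Mathlib

/-- Ramanujan's hypergeometric series `F(α) = ∑ ((2n choose n)/4ⁿ)² αⁿ`. -/
noncomputable def F (α : ℝ) : ℝ :=
  ∑' n : ℕ, ((Nat.choose (2 * n) n : ℝ) / 4 ^ n) ^ 2 * α ^ n

open Real Finset

noncomputable def cc (n : ℕ) : ℝ := (Nat.choose (2*n) n : ℝ) / 4^n

lemma cc_pos (n : ℕ) : 0 < cc n := by
  apply div_pos
  · exact_mod_cast Nat.choose_pos (by omega)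
  · positivity

lemma choose_central_le (n : ℕ) : Nat.choose (2*n) n ≤ 4^n := by
  calc Nat.choose (2*n) n ≤ ∑ i ∈ range (2*n+1), Nat.choose (2*n) i :=
        Finset.single_le_sum (fun i _ => Nat.zero_le _) (by simp; omega)
    _ = 2^(2*n) := Nat.sum_range_choose (2*n)
    _ = 4^n := by rw [pow_mul]; norm_num

lemma cc_le_one (n : ℕ) : cc n ≤ 1 := by
  rw [cc, div_le_one (by positivity)]
  exact_mod_cast choose_central_le n

lemma cc_rec (n : ℕ) : 2 * ((n:ℝ)+1) * cc (n+1) = (2*n+1) * cc n := by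
  have h := Nat.succ_mul_centralBinom_succ n
  have h2 : ∀ m : ℕ, Nat.centralBinom m = Nat.choose (2*m) m := fun m => rfl
  rw [h2, h2] at h
  have := congrArg (fun x : ℕ => (x : ℝ)) h
  push_cast at this
  rw [cc, cc]
  field_simp
  linear_combination (2*(4:ℝ)^n) * this

noncomputable def S (t : ℝ) : ℝ := ∑' n : ℕ, cc n * t^n

lemma summable_cc_mul {t : ℝ} (h : |t| < 1) : Summable (fun n => cc n * t^n) := by
  apply Summable.of_norm_bounded (summable_geometric_of_lt_one (abs_nonneg t) h)
  intro n
  rw [norm_mul, norm_pow, Real.norm_eq_abs, Real.norm_eq_abs, abs_of_pos (cc_pos n)]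
  calc cc n * |t|^n ≤ 1 * |t|^n :=
        mul_le_mul_of_nonneg_right (cc_le_one n) (by positivity)
    _ = |t|^n := one_mul _

lemma summable_n_cc_mul {t : ℝ} (h : |t| < 1) : Summable (fun n : ℕ => (n:ℝ) * cc n * t^n) := by
  have h1 : Summable (fun n : ℕ => (n:ℝ)^1 * |t|^n) :=
    summable_pow_mul_geometric_of_norm_lt_one 1 (by rwa [Real.norm_eq_abs, abs_abs])
  apply Summable.of_norm_bounded h1
  intro n
  rw [norm_mul, norm_mul, Real.norm_eq_abs, Real.norm_eq_abs, Real.norm_eq_abs, abs_pow,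
    Nat.abs_cast, abs_of_pos (cc_pos n), pow_one]
  have := cc_le_one n
  have := (cc_pos n).le
  nlinarith [abs_nonneg t, pow_nonneg (abs_nonneg t) n, Nat.cast_nonneg (α := ℝ) n,
    mul_nonneg (Nat.cast_nonneg (α := ℝ) n) (pow_nonneg (abs_nonneg t) n)]

lemma summable_D {t : ℝ} (h : |t| < 1) : Summable (fun n : ℕ => cc n * ((n:ℝ) * t^(n-1))) := by
  rcases eq_or_ne t 0 with rfl | ht
  · apply summable_of_ne_finset_zero (s := {0,1})
    intro n hn
    simp at hn
    rw [zero_pow (by omega)]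
    ring
  · have h1 := (summable_n_cc_mul h).mul_left (t⁻¹)
    apply h1.congr
    intro n
    cases n with
    | zero => simp
    | succ m =>
      simp only [Nat.add_sub_cancel]
      rw [pow_succ]
      field_simp

lemma S_hasDerivAt {x : ℝ} (hx : |x| < 1) :
    HasDerivAt S (∑' n : ℕ, cc n * ((n:ℝ) * x^(n-1))) x := by
  set r : ℝ := (|x| + 1)/2 with hr
  have hr0 : 0 < r := by positivity
  have hxr : |x| < r := by rw [hr]; linarith
  have hr1 : r < 1 := by rw [hr]; linarith
  have hsum : Summable (fun n : ℕ => (n:ℝ) * r^(n-1)) := by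
    have h1 : Summable (fun n : ℕ => (n:ℝ)^1 * r^n) :=
      summable_pow_mul_geometric_of_norm_lt_one 1 (by rw [Real.norm_eq_abs, abs_of_pos hr0]; exact hr1)
    apply (h1.mul_left (r⁻¹)).congr
    intro n
    cases n with
    | zero => simp
    | succ m => simp only [Nat.add_sub_cancel]; rw [pow_one, pow_succ]; field_simp
  apply hasDerivAt_tsum_of_isPreconnected hsum (isOpen_Ioo (a := -r) (b := r))
    ((convex_Ioo _ _).isPreconnected)
    (fun n y _ => ((hasDerivAt_pow n y).const_mul (cc n)))
    (fun n y hy => ?_) (Set.mem_Ioo.2 ⟨neg_lt_of_abs_lt hxr, lt_of_abs_lt hxr⟩)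
    (summable_cc_mul hx) (Set.mem_Ioo.2 ⟨neg_lt_of_abs_lt hxr, lt_of_abs_lt hxr⟩)
  have hyr : |y| ≤ r := by
    rw [abs_le]; exact ⟨hy.1.le, hy.2.le⟩
  rw [Real.norm_eq_abs, abs_mul, abs_mul, abs_of_pos (cc_pos n), Nat.abs_cast, abs_pow]
  calc cc n * ((n:ℝ) * |y|^(n-1)) ≤ 1 * ((n:ℝ) * r^(n-1)) := by
        apply mul_le_mul (cc_le_one n) _ (by positivity) zero_le_one
        exact mul_le_mul_of_nonneg_left (pow_le_pow_left₀ (abs_nonneg y) hyr _) (Nat.cast_nonneg n)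
    _ = (n:ℝ) * r^(n-1) := one_mul _

lemma ode {x : ℝ} (hx : |x| < 1) :
    2 * (1 - x) * (∑' n : ℕ, cc n * ((n:ℝ) * x^(n-1))) = S x := by
  set D : ℝ := ∑' n : ℕ, cc n * ((n:ℝ) * x^(n-1)) with hD
  have hsD := summable_D hx
  have hsS := summable_cc_mul hx
  have hsT := summable_n_cc_mul hx
  -- D = ∑ cc (n+1) * (n+1) * x^n
  have h1 : D = ∑' n : ℕ, cc (n+1) * ((n:ℝ)+1) * x^n := by
    rw [hD, hsD.tsum_eq_zero_add]
    simp only [Nat.cast_zero, zero_mul, mul_zero, zero_add]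
    apply tsum_congr
    intro n
    push_cast
    ring_nf
  -- each term equals n*cc n*x^n + (cc n/2)*x^n
  have h2 : ∀ n : ℕ, cc (n+1) * ((n:ℝ)+1) * x^n = (n:ℝ) * cc n * x^n + (cc n / 2) * x^n := by
    intro n
    have := cc_rec n
    linear_combination (x^n / 2) * this
  have h3 : D = (∑' n : ℕ, (n:ℝ) * cc n * x^n) + (∑' n : ℕ, (cc n / 2) * x^n) := by
    rw [h1]
    rw [tsum_congr h2]
    exact hsT.tsum_add (by simpa [div_eq_mul_inv, mul_comm, mul_assoc, mul_left_comm] using hsS.mul_left (1/2 : ℝ))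
  have h4 : x * D = ∑' n : ℕ, (n:ℝ) * cc n * x^n := by
    rw [hD, ← tsum_mul_left]
    apply tsum_congr
    intro n
    cases n with
    | zero => simp
    | succ m => rw [pow_succ]; push_cast; ring
  have h5 : (∑' n : ℕ, (cc n / 2) * x^n) = S x / 2 := by
    rw [S, ← tsum_div_const]
    apply tsum_congr
    intro n
    ring
  rw [h5] at h3
  have := h4
  nlinarith [h3, h4]

lemma S_zero : S 0 = 1 := by
  rw [S, tsum_eq_single 0 (fun n hn => by simp [zero_pow hn])]
  simp [cc]

lemma S_hasDerivAt' {x : ℝ} (hx : |x| < 1) :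
    HasDerivAt (fun y => (S y)^2 * (1 - y)) 0 x := by
  have hS := S_hasDerivAt hx
  have h1 : HasDerivAt (fun y => (S y)^2) (2 * S x * (∑' n : ℕ, cc n * ((n:ℝ) * x^(n-1)))) x := by
    have := (hasDerivAt_pow 2 (S x)).comp x hS
    simpa [Function.comp_def, mul_comm, mul_assoc, mul_left_comm] using this
  have h2 : HasDerivAt (fun y : ℝ => 1 - y) (-1) x := by
    simpa using (hasDerivAt_id x).const_sub 1
  have h3 := h1.mul h2
  have hval : 2 * S x * (∑' n : ℕ, cc n * ((n:ℝ) * x^(n-1))) * (1 - x) + (S x)^2 * (-1) = 0 := by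
    have := ode hx
    linear_combination S x * this
  rw [hval] at h3
  exact h3

lemma S_sq {t : ℝ} (h0 : 0 ≤ t) (h1 : t < 1) : (S t)^2 * (1 - t) = 1 := by
  have key := constant_of_has_deriv_right_zero
    (f := fun y => (S y)^2 * (1 - y)) (a := 0) (b := t)
    (fun x hx => by
      have hax : |x| < 1 := by
        rw [abs_lt]; constructor <;> [linarith [hx.1]; linarith [hx.2]]
      exact (S_hasDerivAt' hax).continuousAt.continuousWithinAt)
    (fun x hx => by
      have hax : |x| < 1 := by
        rw [abs_lt]; constructor <;> [linarith [hx.1]; linarith [hx.2]]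
      exact (S_hasDerivAt' hax).hasDerivWithinAt)
    t (Set.mem_Icc.2 ⟨h0, le_rfl⟩)
  simpa [S_zero] using key

lemma S_nonneg {t : ℝ} (h0 : 0 ≤ t) : 0 ≤ S t := by
  apply tsum_nonneg
  intro n
  exact mul_nonneg (cc_pos n).le (pow_nonneg h0 n)

lemma S_eq {t : ℝ} (h0 : 0 ≤ t) (h1 : t < 1) : S t = (Real.sqrt (1 - t))⁻¹ := by
  have hsq := S_sq h0 h1
  have h1t : (0:ℝ) < 1 - t := by linarith
  have : S t = Real.sqrt ((S t)^2) := (Real.sqrt_sq (S_nonneg h0)).symm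
  rw [this]
  rw [show (S t)^2 = (1 - t)⁻¹ by field_simp; nlinarith [hsq]]
  rw [Real.sqrt_inv]

open intervalIntegral MeasureTheory in
lemma cc_prod (n : ℕ) : cc n = ∏ i ∈ range n, (2*(i:ℝ)+1)/(2*i+2) := by
  induction n with
  | zero => simp [cc]
  | succ m ih =>
    rw [prod_range_succ, ← ih]
    have h := cc_rec m
    have hm : (0:ℝ) < 2*((m:ℝ)+1) := by positivity
    field_simp
    linear_combination h

lemma wallis (n : ℕ) : ∫ θ in (0:ℝ)..(π/2), Real.sin θ ^ (2*n) = π/2 * cc n := by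
  have hint : ∀ a b : ℝ, IntervalIntegrable (fun x => Real.sin x ^ (2*n)) MeasureTheory.volume a b :=
    fun a b => (Real.continuous_sin.pow _).intervalIntegrable a b
  have hsym : (∫ θ in (π/2:ℝ)..π, Real.sin θ ^ (2*n)) = ∫ θ in (0:ℝ)..(π/2), Real.sin θ ^ (2*n) := by
    have h1 : (∫ θ in (π/2:ℝ)..π, Real.sin (π - θ) ^ (2*n)) =
        ∫ θ in (π - π : ℝ)..(π - π/2), Real.sin θ ^ (2*n) :=
      intervalIntegral.integral_comp_sub_left (fun x => Real.sin x ^ (2*n)) π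
    simp only [Real.sin_pi_sub] at h1
    rw [h1, show π - π = (0:ℝ) by ring, show π - π/2 = π/2 by ring]
  have hadd := intervalIntegral.integral_add_adjacent_intervals
    (hint 0 (π/2)) (hint (π/2) π)
  have heven := integral_sin_pow_even (n := n)
  rw [← cc_prod] at heven
  have : (∫ θ in (0:ℝ)..(π/2), Real.sin θ ^ (2*n)) + (∫ θ in (0:ℝ)..(π/2), Real.sin θ ^ (2*n))
      = π * cc n := by
    rw [hsym] at hadd
    linarith [hadd, heven]
  linarith

lemma F_eq (α : ℝ) : F α = ∑' n : ℕ, (cc n)^2 * α^n := rfl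

lemma F_summable {α : ℝ} (h0 : 0 ≤ α) (h1 : α < 1) :
    Summable (fun n : ℕ => (cc n)^2 * α^n) := by
  apply Summable.of_norm_bounded (summable_geometric_of_lt_one h0 h1)
  intro n
  rw [Real.norm_eq_abs, abs_mul, abs_pow, abs_pow, abs_of_pos (cc_pos n), abs_of_nonneg h0]
  calc (cc n)^2 * α^n ≤ 1^2 * α^n := by
        apply mul_le_mul_of_nonneg_right _ (by positivity)
        exact pow_le_pow_left₀ (cc_pos n).le (cc_le_one n) 2
    _ = α^n := by ring

open MeasureTheory in
lemma F_integral {α : ℝ} (h0 : 0 ≤ α) (h1 : α < 1) :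
    (∫ θ in (0:ℝ)..(π/2), (Real.sqrt (1 - α * Real.sin θ^2))⁻¹) = π/2 * F α := by
  have hx : ∀ θ : ℝ, 0 ≤ α * Real.sin θ^2 ∧ α * Real.sin θ^2 < 1 := by
    intro θ
    constructor
    · positivity
    · calc α * Real.sin θ^2 ≤ α * 1 :=
            mul_le_mul_of_nonneg_left (by nlinarith [Real.sin_sq_le_one θ]) h0
        _ < 1 := by linarith
  have hpt : ∀ θ : ℝ, (Real.sqrt (1 - α * Real.sin θ^2))⁻¹
      = ∑' n : ℕ, cc n * (α * Real.sin θ^2)^n := by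
    intro θ
    rw [← S, S_eq (hx θ).1 (hx θ).2]
  rw [intervalIntegral.integral_congr (g := fun θ => ∑' n : ℕ, cc n * (α * Real.sin θ^2)^n)
    (fun θ _ => hpt θ)]
  rw [intervalIntegral.integral_of_le (by positivity : (0:ℝ) ≤ π/2)]
  have hterm : ∀ n : ℕ, (∫ θ in Set.Ioc (0:ℝ) (π/2), cc n * (α * Real.sin θ^2)^n)
      = π/2 * ((cc n)^2 * α^n) := by
    intro n
    have h1 : ∀ θ : ℝ, cc n * (α * Real.sin θ^2)^n = (cc n * α^n) * Real.sin θ^(2*n) := by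
      intro θ
      rw [mul_pow, pow_mul]
      ring
    simp_rw [h1]
    rw [MeasureTheory.integral_const_mul, ← intervalIntegral.integral_of_le
      (by positivity : (0:ℝ) ≤ π/2), wallis]
    ring
  have hcont : ∀ n : ℕ, Continuous (fun θ : ℝ => cc n * (α * Real.sin θ^2)^n) := by
    intro n; fun_prop
  have hint : ∀ n : ℕ, Integrable (fun θ : ℝ => cc n * (α * Real.sin θ^2)^n)
      (volume.restrict (Set.Ioc (0:ℝ) (π/2))) := by
    intro n
    exact (hcont n).integrableOn_Ioc
  rw [← MeasureTheory.integral_tsum_of_summable_integral_norm hint ?_]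
  · rw [tsum_congr hterm, tsum_mul_left, ← F_eq]
  · apply Summable.of_nonneg_of_le (fun n => integral_nonneg (fun θ => norm_nonneg _))
      (fun n => ?_) ((F_summable h0 h1).mul_left (π/2))
    have hnn : ∀ θ : ℝ, 0 ≤ cc n * (α * Real.sin θ^2)^n := by
      intro θ
      exact mul_nonneg (cc_pos n).le (pow_nonneg (hx θ).1 n)
    have : (∫ θ in Set.Ioc (0:ℝ) (π/2), ‖cc n * (α * Real.sin θ^2)^n‖)
        = ∫ θ in Set.Ioc (0:ℝ) (π/2), cc n * (α * Real.sin θ^2)^n := by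
      apply integral_congr_ae
      filter_upwards with θ
      rw [Real.norm_eq_abs, abs_of_nonneg (hnn θ)]
    rw [this, hterm n]

lemma landen {k : ℝ} (hk0 : 0 < k) (hk1 : k < 1) (hkk : k^2 + 2*k = 1) :
    (∫ θ in (0:ℝ)..(π/2), (Real.sqrt (1 - (1-k^2) * Real.sin θ^2))⁻¹)
      = (1+k) * ∫ θ in (0:ℝ)..(π/2), (Real.sqrt (1 - k^2 * Real.sin θ^2))⁻¹ := by
  have hpi2 : (0:ℝ) ≤ π/2 := by positivity
  set g : ℝ → ℝ := fun φ => (Real.sqrt (1 - (1-k^2) * Real.sin φ^2))⁻¹ with hg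
  set u : ℝ → ℝ := fun θ => (1+k) * Real.sin θ / (1 + k * Real.sin θ^2) with hu
  set f : ℝ → ℝ := fun θ => Real.arcsin (u θ) with hf
  set F' : ℝ → ℝ := fun θ => (1+k) * (1 - k * Real.sin θ^2) /
    ((1 + k * Real.sin θ^2) * Real.sqrt (1 - k^2 * Real.sin θ^2)) with hF'
  -- basic positivity facts
  have hA : ∀ θ : ℝ, 0 < 1 + k * Real.sin θ^2 := by
    intro θ; nlinarith [sq_nonneg (Real.sin θ)]
  have hs2 : ∀ θ : ℝ, Real.sin θ^2 ≤ 1 := fun θ => Real.sin_sq_le_one θ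
  have hB : ∀ θ : ℝ, 0 < 1 - k * Real.sin θ^2 := by
    intro θ; nlinarith [hs2 θ]
  have hC : ∀ θ : ℝ, 0 < 1 - k^2 * Real.sin θ^2 := by
    intro θ; nlinarith [hs2 θ]
  have hCs : ∀ θ : ℝ, 0 < Real.sqrt (1 - k^2 * Real.sin θ^2) :=
    fun θ => Real.sqrt_pos.2 (hC θ)
  have hg_pos : ∀ φ : ℝ, 0 < 1 - (1-k^2) * Real.sin φ^2 := by
    intro φ; nlinarith [hs2 φ]
  -- u bounds on [0, π/2]
  have hu_mem : ∀ θ ∈ Set.Icc (0:ℝ) (π/2), 0 ≤ u θ ∧ u θ ≤ 1 := by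
    intro θ hθ
    have hv0 : 0 ≤ Real.sin θ := Real.sin_nonneg_of_nonneg_of_le_pi hθ.1 (by linarith [hθ.2, Real.pi_pos])
    have hv1 : Real.sin θ ≤ 1 := Real.sin_le_one θ
    constructor
    · apply div_nonneg _ (hA θ).le
      positivity
    · rw [hu, div_le_one (hA θ)]
      nlinarith [mul_nonneg hk0.le (mul_nonneg hv0 hv0)]
  -- continuity of f
  have hu_cont : Continuous u := by
    apply Continuous.div (by fun_prop) (by fun_prop)
    intro θ; exact (hA θ).ne'
  have hf_cont : Continuous f := Real.continuous_arcsin.comp hu_cont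
  -- continuity of F'
  have hF'_cont : Continuous F' := by
    apply Continuous.div (by fun_prop)
    · apply Continuous.mul (by fun_prop)
      exact Real.continuous_sqrt.comp (by fun_prop)
    · intro θ
      exact (mul_pos (hA θ) (hCs θ)).ne'
  -- continuity of g
  have hg_cont : Continuous g := by
    apply Continuous.inv₀
    · exact Real.continuous_sqrt.comp (by fun_prop)
    · intro φ
      exact (Real.sqrt_pos.2 (hg_pos φ)).ne'
  -- derivative of f on the open interval
  have hderiv : ∀ θ ∈ Set.Ioo (0:ℝ) (π/2), HasDerivAt f (F' θ) θ := by
    intro θ hθ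
    have hv0 : 0 < Real.sin θ := Real.sin_pos_of_pos_of_lt_pi hθ.1 (by linarith [hθ.2, Real.pi_pos])
    have hv1 : Real.sin θ < 1 := by
      have := Real.strictMonoOn_sin (a := θ) (b := π/2)
        ⟨by linarith [Real.pi_pos, hθ.1], by linarith [hθ.2]⟩
        ⟨by linarith [Real.pi_pos], le_rfl⟩ hθ.2
      simpa using this
    have hcos : 0 < Real.cos θ := Real.cos_pos_of_mem_Ioo
      ⟨by linarith [Real.pi_pos, hθ.1], hθ.2⟩
    set v := Real.sin θ with hv
    -- u θ strictly between 0 and 1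
    have hU1 : u θ < 1 := by
      rw [hu, div_lt_one (hA θ)]
      nlinarith [mul_pos hk0 (mul_pos hv0 hv0)]
    have hU0 : 0 < u θ := by
      apply div_pos _ (hA θ)
      positivity
    -- derivative of u
    have hu_deriv : HasDerivAt u
        ((1+k) * Real.cos θ * (1 - k * v^2) / (1 + k * v^2)^2) θ := by
      have h1 : HasDerivAt (fun θ => (1+k) * Real.sin θ) ((1+k) * Real.cos θ) θ :=
        (Real.hasDerivAt_sin θ).const_mul (1+k)
      have h2 : HasDerivAt (fun θ => 1 + k * Real.sin θ^2)
          (k * (2 * Real.sin θ * Real.cos θ)) θ := by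
        have := ((Real.hasDerivAt_sin θ).pow 2).const_mul k
        simpa [mul_comm, mul_assoc, mul_left_comm] using this.const_add 1
      have := h1.div h2 (hA θ).ne'
      refine this.congr_deriv ?_
      field_simp
      ring
    have harc : HasDerivAt Real.arcsin (1 / Real.sqrt (1 - (u θ)^2)) (u θ) :=
      Real.hasDerivAt_arcsin (by linarith) (by linarith)
    have hcomp := harc.comp θ hu_deriv
    refine hcomp.congr_deriv ?_
    symm
    -- simplify 1 / sqrt(1 - u²) * u'
    have h1u : 1 - (u θ)^2 = ((1-v^2) * (1 - k^2*v^2)) / (1 + k*v^2)^2 := by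
      rw [hu]
      field_simp
      ring
    have hsq : Real.sqrt (1 - (u θ)^2) = Real.cos θ * Real.sqrt (1 - k^2*v^2) / (1 + k*v^2) := by
      rw [h1u]
      rw [show ((1-v^2) * (1 - k^2*v^2)) / (1 + k*v^2)^2
          = (Real.cos θ * Real.sqrt (1 - k^2*v^2) / (1 + k*v^2))^2 by
        rw [div_pow, mul_pow, Real.sq_sqrt (hC θ).le, Real.cos_sq', ← hv]]
      exact Real.sqrt_sq (by positivity)
    simp only [hF']
    rw [hsq]
    have hne1 := (hA θ).ne'
    have hne2 := (hCs θ).ne'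
    have hne3 := hcos.ne'
    rw [← hv] at hne1 hne2 ⊢
    field_simp
  -- endpoints
  have hf0 : f 0 = 0 := by simp [hf, hu]
  have hfpi : f (π/2) = π/2 := by
    have h1 : u (π/2) = 1 := by
      rw [hu]
      simp only [Real.sin_pi_div_two, one_pow, mul_one]
      rw [div_eq_one_iff_eq (by positivity)]
    show Real.arcsin (u (π/2)) = π/2
    rw [h1, Real.arcsin_one]
  have hmm : Set.uIcc (0:ℝ) (π/2) = Set.Icc 0 (π/2) := Set.uIcc_of_le hpi2
  have hcov := intervalIntegral.integral_comp_smul_deriv'' (f := f) (f' := F') (g := g)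
    (a := 0) (b := π/2)
    (hf_cont.continuousOn)
    (by
      rw [min_eq_left hpi2, max_eq_right hpi2]
      exact fun x hx => (hderiv x hx).hasDerivWithinAt)
    (hF'_cont.continuousOn)
    (hg_cont.continuousOn)
  rw [hf0, hfpi] at hcov
  have h2k : 1 - k^2 = 2*k := by linarith
  have hk2 : (1+k)^2 = 2 := by nlinarith
  have hpt2 : ∀ θ ∈ Set.uIcc (0:ℝ) (π/2),
      (1+k) * (Real.sqrt (1 - k^2*Real.sin θ^2))⁻¹ = F' θ • (g ∘ f) θ := by
    intro θ hθ
    rw [hmm] at hθ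
    obtain ⟨hu0, hu1⟩ := hu_mem θ hθ
    have hsinf : Real.sin (f θ) = u θ := Real.sin_arcsin (by linarith) hu1
    simp only [Function.comp, hg, smul_eq_mul]
    rw [hsinf]
    have key : 1 - (1-k^2) * (u θ)^2
        = ((1 - k*Real.sin θ^2)/(1 + k*Real.sin θ^2))^2 := by
      rw [h2k, hu]
      field_simp
      linear_combination (2*k*Real.sin θ^2 * (1 + k * Real.sin θ ^ 2)^2) * hk2
        + (-2*k^3*Real.sin θ^6 - 4*k^2*Real.sin θ^4 - 4*k*Real.sin θ^2) * hkk
    rw [key, Real.sqrt_sq (div_nonneg (hB θ).le (hA θ).le), inv_div]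
    simp only [hF']
    have hA' := (hA θ).ne'
    have hB' := (hB θ).ne'
    have hC' := (hCs θ).ne'
    field_simp
  rw [← hcov, ← intervalIntegral.integral_const_mul]
  exact intervalIntegral.integral_congr (fun θ hθ => (hpt2 θ hθ).symm)

lemma F_lt {a b : ℝ} (h0 : 0 ≤ a) (hab : a < b) (hb : b < 1) : F a < F b := by
  rw [F_eq, F_eq]
  have hb0 : 0 ≤ b := le_trans h0 hab.le
  apply Summable.tsum_lt_tsum (i := 1)
    (fun n => mul_le_mul_of_nonneg_left (pow_le_pow_left₀ h0 hab.le n) (by positivity))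
    _ (F_summable h0 (lt_trans hab hb)) (F_summable hb0 hb)
  simp only [pow_one]
  exact mul_lt_mul_of_pos_left hab (by nlinarith [cc_pos 1])


theorem singular_modulus_two (α : ℝ) (h0 : 0 < α) (h1 : α < 1)
    (h : F (1 - α) = Real.sqrt 2 * F α) :
    α = (Real.sqrt 2 - 1) ^ 2 := by
  have h2 : Real.sqrt 2 ^ 2 = 2 := Real.sq_sqrt (by norm_num)
  have hs0 : 0 ≤ Real.sqrt 2 := Real.sqrt_nonneg 2
  have hs1 : 1 < Real.sqrt 2 := by nlinarith
  have hs2 : Real.sqrt 2 < 2 := by nlinarith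
  set k : ℝ := Real.sqrt 2 - 1 with hk
  have hk0 : 0 < k := by simp [hk]; linarith
  have hk1 : k < 1 := by simp [hk]; linarith
  have hkk : k^2 + 2*k = 1 := by rw [hk]; nlinarith
  have hk2' : 0 < k^2 := by positivity
  have hk21 : k^2 < 1 := by nlinarith
  -- key identity from Landen
  have hkey : F (1 - k^2) = Real.sqrt 2 * F (k^2) := by
    have hL := landen hk0 hk1 hkk
    have hI1 := F_integral (α := 1 - k^2) (by nlinarith) (by nlinarith)
    have hI2 := F_integral (α := k^2) hk2'.le hk21
    rw [hI1, hI2] at hL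
    have hsum : 1 + k = Real.sqrt 2 := by rw [hk]; ring
    rw [hsum] at hL
    have hpi := Real.pi_pos
    nlinarith [hL]
  -- uniqueness by monotonicity
  rcases lt_trichotomy α (k^2) with hlt | heq | hgt
  · exfalso
    have hFa : F α < F (k^2) := F_lt h0.le hlt hk21
    have hFb : F (1 - k^2) < F (1 - α) := F_lt (by nlinarith) (by linarith) (by linarith)
    rw [h, hkey] at hFb
    nlinarith [hFa, hFb]
  · rw [heq, hk]
  · exfalso
    have hFa : F (k^2) < F α := F_lt hk2'.le hgt h1
    have hFb : F (1 - α) < F (1 - k^2) := F_lt (by linarith) (by linarith) (by nlinarith)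
    rw [h, hkey] at hFb
    nlinarith [hFa, hFb]
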